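/- If there exists a g1-regular (K1, F1, Z1, S1) base PDA with parameter λ, then for every positive integer m there exists an (m·g1)-regular PDA with parameters (m·K1, λ·(F1/λ)^m, Z1·(F1/λ)^{m−1}, S1·(F1/λ)^{m−1}). -/

import Mathlib

open Finset

/-- A (K,F,Z,S) placement delivery array: an F×K array over {*} ∪ [1:S],
    with `none` playing the role of `*`. Columns are indexed by `κ`. -/
def IsPDA {F S : ℕ} {κ : Type} [Fintype κ]
    (Z : ℕ) (P : Fin F → κ → Option (Fin S)) : Prop :=
  -- C1: each column contains exactly Z stars
  (∀ k : κ, (Finset.univ.filter (fun j : Fin F => P j k = none)).card = Z) ∧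
  -- C2: every integer occurs at least once
  (∀ s : Fin S, ∃ j k, P j k = some s) ∧
  -- C3: the 2×2 star-crossing condition
  (∀ j₁ j₂ : Fin F, ∀ k₁ k₂ : κ, ∀ s : Fin S,
    (j₁, k₁) ≠ (j₂, k₂) → P j₁ k₁ = some s → P j₂ k₂ = some s →
    P j₁ k₂ = none ∧ P j₂ k₁ = none)

/-- `P` is `g`-regular: every integer appears exactly `g` times. -/
def PDARegular {F S : ℕ} {κ : Type} [Fintype κ]
    (g : ℕ) (P : Fin F → κ → Option (Fin S)) : Prop :=
  ∀ s : Fin S, (Finset.univ.filter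
    (fun jk : Fin F × κ => P jk.1 jk.2 = some s)).card = g

/-- A base PDA with parameter `lam`: a PDA with `lam ∣ F`, `lam ∣ Z`,
    star pattern row-periodic with period `F/lam` (C4), and a star-row
    assignment `φ` into the first `F/lam` rows with all fibers of size
    `lam*S/F` (C5, stated multiplicatively: `card * F = lam * S`). -/
def IsBasePDA {F S : ℕ} {κ : Type} [Fintype κ]
    (Z lam : ℕ) (P : Fin F → κ → Option (Fin S)) : Prop :=
  IsPDA Z P ∧ 0 < lam ∧ lam ∣ F ∧ lam ∣ Z ∧
  (∀ j₁ j₂ : Fin F, ∀ k : κ, j₁.val % (F / lam) = j₂.val % (F / lam) →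
    (P j₁ k = none ↔ P j₂ k = none)) ∧
  (∃ φ : Fin S → Fin F, (∀ s, (φ s).val < F / lam) ∧
    (∀ s : Fin S, ∀ j : Fin F, ∀ k : κ, P j k = some s → P (φ s) k = none) ∧
    (∀ r : Fin F, r.val < F / lam →
      (Finset.univ.filter (fun s : Fin S => φ s = r)).card * F = lam * S))

section CPAuxHelpers

variable {lam q F₁ : ℕ}
def cpRow (hFq : lam * q = F₁) (a : Fin lam) (r : Fin q) : Fin F₁ :=
  Fin.cast hFq (finProdFinEquiv (a, r))
def cpDiv (hFq : lam * q = F₁) (j : Fin F₁) : Fin lam :=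
  (finProdFinEquiv.symm (Fin.cast hFq.symm j)).1
def cpRes (hFq : lam * q = F₁) (j : Fin F₁) : Fin q :=
  (finProdFinEquiv.symm (Fin.cast hFq.symm j)).2
lemma cpRow_comp (hFq : lam * q = F₁) (j : Fin F₁) :
    cpRow hFq (cpDiv hFq j) (cpRes hFq j) = j := by
  show Fin.cast hFq (finProdFinEquiv (finProdFinEquiv.symm (Fin.cast hFq.symm j))) = j
  rw [Equiv.apply_symm_apply]; rfl
lemma cpDiv_row (hFq : lam * q = F₁) (a : Fin lam) (r : Fin q) :
    cpDiv hFq (cpRow hFq a r) = a := by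
  have : Fin.cast hFq.symm (cpRow hFq a r) = finProdFinEquiv (a, r) := rfl
  rw [cpDiv, this, Equiv.symm_apply_apply]
lemma cpRes_row (hFq : lam * q = F₁) (a : Fin lam) (r : Fin q) :
    cpRes hFq (cpRow hFq a r) = r := by
  have : Fin.cast hFq.symm (cpRow hFq a r) = finProdFinEquiv (a, r) := rfl
  rw [cpRes, this, Equiv.symm_apply_apply]
lemma cpRow_mod (hFq : lam * q = F₁) (a : Fin lam) (r : Fin q) :
    (cpRow hFq a r).val % q = r.val := by
  show ((r : ℕ) + q * (a : ℕ)) % q = r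
  rw [Nat.add_mul_mod_self_left, Nat.mod_eq_of_lt r.isLt]

lemma fiber_decode {S₁ q t : ℕ} (res : Fin S₁ → Fin q)
    (hfc : ∀ r, (Finset.univ.filter fun s => res s = r).card = t) :
    ∃ (dec : Fin q → Fin t → Fin S₁) (ix : Fin S₁ → Fin t),
      (∀ r b, res (dec r b) = r) ∧ (∀ s, dec (res s) (ix s) = s) ∧
      (∀ r b, ix (dec r b) = b) := by
  classical
  set dec : Fin q → Fin t → Fin S₁ :=
    fun r b => ((Finset.univ.filter fun s => res s = r).orderIsoOfFin (hfc r) b : Fin S₁)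
    with hdec
  set ix : Fin S₁ → Fin t :=
    fun s => ((Finset.univ.filter fun s' => res s' = res s).orderIsoOfFin (hfc _)).symm
      ⟨s, by simp⟩ with hix
  have hres : ∀ r b, res (dec r b) = r := by
    intro r b
    rw [hdec]
    show res (((Finset.univ.filter fun s => res s = r).orderIsoOfFin (hfc r) b : Fin S₁)) = r
    exact (Finset.mem_filter.mp
      ((Finset.univ.filter fun s => res s = r).orderIsoOfFin (hfc r) b).2).2
  have hdix : ∀ s, dec (res s) (ix s) = s := by
    intro s
    rw [hdec, hix]
    show (((Finset.univ.filter fun s' => res s' = res s).orderIsoOfFin (hfc _))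
      (((Finset.univ.filter fun s' => res s' = res s).orderIsoOfFin (hfc _)).symm
        ⟨s, by simp⟩) : Fin S₁) = s
    rw [OrderIso.apply_symm_apply]
  have hinj : ∀ r b b', dec r b = dec r b' → b = b' := by
    intro r b b' hbb
    rw [hdec] at hbb
    exact ((Finset.univ.filter fun s => res s = r).orderIsoOfFin (hfc r)).injective
      (Subtype.coe_injective hbb)
  exact ⟨dec, ix, hres, hdix, fun r b => hinj _ _ _
    ((hdix _).trans (congrArg (fun z => dec z b) (hres r b)).symm)⟩

end CPAuxHelpers

def cpQ {lam q F₁ K₁ S₁ m t : ℕ} (hFq : lam * q = F₁)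
    (P : Fin F₁ → Fin K₁ → Option (Fin S₁))
    (res : Fin S₁ → Fin q) (ix : Fin S₁ → Fin t)
    (x : Fin lam × (Fin m → Fin q)) (c : Fin m × Fin K₁) :
    Option ((Fin m → Fin q) × Fin t) :=
  (P (cpRow hFq x.1 (x.2 c.1)) c.2).map fun s => (Function.update x.2 c.1 (res s), ix s)

lemma construct_aux {lam q F₁ K₁ S₁ Z₁ g₁ t m : ℕ} (hm : 0 < m)
    (hFq : lam * q = F₁)
    (P : Fin F₁ → Fin K₁ → Option (Fin S₁))
    (hC1 : ∀ k, (univ.filter fun j : Fin F₁ => P j k = none).card = Z₁)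
    (hC2 : ∀ s, ∃ j k, P j k = some s)
    (hC3 : ∀ j₁ j₂ k₁ k₂ (s : Fin S₁), (j₁,k₁) ≠ (j₂,k₂) → P j₁ k₁ = some s →
      P j₂ k₂ = some s → P j₁ k₂ = none ∧ P j₂ k₁ = none)
    (hreg : ∀ s, (univ.filter fun jk : Fin F₁ × Fin K₁ => P jk.1 jk.2 = some s).card = g₁)
    (res : Fin S₁ → Fin q) (dec : Fin q → Fin t → Fin S₁) (ix : Fin S₁ → Fin t)
    (hstar : ∀ s j k, P j k = some s → ∀ a : Fin lam, P (cpRow hFq a (res s)) k = none)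
    (hdres : ∀ r b, res (dec r b) = r)
    (hdix : ∀ s, dec (res s) (ix s) = s)
    (hixd : ∀ r b, ix (dec r b) = b)
    (hqt : q * t = S₁) :
    ∃ Q : Fin (lam * q ^ m) → Fin (m * K₁) → Option (Fin (S₁ * q ^ (m - 1))),
      IsPDA (Z₁ * q ^ (m - 1)) Q ∧ PDARegular (m * g₁) Q := by
  classical
  set Q₀ := cpQ hFq P res ix with hQ₀
  have hnone : ∀ x c, Q₀ x c = none ↔ P (cpRow hFq x.1 (x.2 c.1)) c.2 = none := by
    intro x c; rw [hQ₀]; simp [cpQ]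
  have hsome : ∀ x c (σ : (Fin m → Fin q) × Fin t),
      Q₀ x c = some σ ↔
        (P (cpRow hFq x.1 (x.2 c.1)) c.2 = some (dec (σ.1 c.1) σ.2) ∧
          Function.update x.2 c.1 (res (dec (σ.1 c.1) σ.2)) = σ.1) := by
    intro x c σ
    constructor
    · intro hx
      rw [hQ₀] at hx
      obtain ⟨s, hs, hmap⟩ := Option.map_eq_some_iff.mp hx
      have h1 : Function.update x.2 c.1 (res s) = σ.1 := congrArg Prod.fst hmap
      have h2 : ix s = σ.2 := congrArg Prod.snd hmap
      have hw : σ.1 c.1 = res s := by rw [← h1, Function.update_self]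
      have hsd : dec (σ.1 c.1) σ.2 = s := by rw [hw, ← h2, hdix]
      rw [hsd]; exact ⟨hs, h1⟩
    · rintro ⟨h1, h2⟩
      rw [hQ₀]
      show (P (cpRow hFq x.1 (x.2 c.1)) c.2).map _ = some σ
      rw [h1, Option.map_some]
      have : (Function.update x.2 c.1 (res (dec (σ.1 c.1) σ.2)), ix (dec (σ.1 c.1) σ.2)) = σ := by
        rw [Prod.ext_iff]; exact ⟨h2, hixd _ _⟩
      rw [this]

  have habs1 : ∀ c : Fin m × Fin K₁,
      (univ.filter fun x : Fin lam × (Fin m → Fin q) => Q₀ x c = none).card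
        = Z₁ * q ^ (m - 1) := by
    rintro ⟨i, k⟩
    have hbij : (univ.filter fun x : Fin lam × (Fin m → Fin q) => Q₀ x (i, k) = none).card
        = ((univ.filter fun j : Fin F₁ => P j k = none) ×ˢ
            (univ : Finset ({l : Fin m // ¬ l = i} → Fin q))).card := by
      apply Finset.card_nbij'
        (i := fun x => (cpRow hFq x.1 (x.2 i), fun l => x.2 l.1))
        (j := fun y => (cpDiv hFq y.1, fun l => if h : l = i then cpRes hFq y.1 else y.2 ⟨l, h⟩))
      · intro x hx
        simp only [Finset.mem_coe, Finset.mem_filter, Finset.mem_univ, true_and] at hx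
        rw [Finset.mem_coe, Finset.mem_product]
        refine ⟨?_, Finset.mem_univ _⟩
        simp only [Finset.mem_filter, Finset.mem_univ, true_and]
        exact (hnone x (i, k)).mp hx
      · intro y hy
        rw [Finset.mem_coe, Finset.mem_product] at hy
        have hy1 : P y.1 k = none := by
          have := hy.1; simp only [Finset.mem_filter, Finset.mem_univ, true_and] at this
          exact this
        simp only [Finset.mem_coe, Finset.mem_filter, Finset.mem_univ, true_and]
        rw [hnone]
        show P (cpRow hFq (cpDiv hFq y.1) (if h : i = i then cpRes hFq y.1 else y.2 ⟨i, h⟩)) k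
          = none
        rw [dif_pos rfl, cpRow_comp]
        exact hy1
      · intro x hx
        ext
        · exact congrArg Fin.val (cpDiv_row hFq x.1 (x.2 i))
        · rename_i l
          by_cases hl : l = i
          · subst hl
            simp only [dif_pos]
            exact congrArg Fin.val (cpRes_row hFq x.1 (x.2 l))
          · simp only [dif_neg hl]
      · intro y hy
        ext
        · show (cpRow hFq (cpDiv hFq y.1)
            (if h : i = i then cpRes hFq y.1 else y.2 ⟨i, h⟩)).val = y.1.val
          rw [dif_pos rfl, cpRow_comp]
        · rename_i l
          show (if h : (l : Fin m) = i then cpRes hFq y.1 else y.2 ⟨l, h⟩).val = (y.2 l).val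
          rw [dif_neg l.2]
    rw [hbij, Finset.card_product, hC1 k, Finset.card_univ, Fintype.card_fun,
      Fintype.card_subtype_compl, Fintype.card_subtype_eq, Fintype.card_fin, Fintype.card_fin]

  have habs2 : ∀ σ : (Fin m → Fin q) × Fin t, ∃ x c, Q₀ x c = some σ := by
    rintro ⟨w, b⟩
    set i₀ : Fin m := ⟨0, hm⟩
    obtain ⟨j, k, hjk⟩ := hC2 (dec (w i₀) b)
    refine ⟨(cpDiv hFq j, Function.update w i₀ (cpRes hFq j)), (i₀, k), ?_⟩
    rw [hsome]
    constructor
    · show P (cpRow hFq (cpDiv hFq j) (Function.update w i₀ (cpRes hFq j) i₀)) k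
        = some (dec (w i₀) b)
      rw [Function.update_self, cpRow_comp]
      exact hjk
    · show Function.update (Function.update w i₀ (cpRes hFq j)) i₀ (res (dec (w i₀) b)) = w
      rw [Function.update_idem, hdres, Function.update_eq_self]
  have habs3 : ∀ x₁ x₂ c₁ c₂ (σ : (Fin m → Fin q) × Fin t), (x₁, c₁) ≠ (x₂, c₂) →
      Q₀ x₁ c₁ = some σ → Q₀ x₂ c₂ = some σ → Q₀ x₁ c₂ = none ∧ Q₀ x₂ c₁ = none := by
    rintro ⟨a, r⟩ ⟨a', r'⟩ ⟨i, k⟩ ⟨i', k'⟩ ⟨w, b⟩ hne h1 h2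
    rw [hsome] at h1 h2
    obtain ⟨h1p, h1u⟩ := h1
    obtain ⟨h2p, h2u⟩ := h2
    dsimp only at h1p h1u h2p h2u
    by_cases hii : i = i'
    · subst hii
      -- same column position index
      have hrr : ∀ l, l ≠ i → r l = r' l := by
        intro l hl
        have e1 : Function.update r i (res (dec (w i) b)) l = w l := by rw [h1u]
        have e2 : Function.update r' i (res (dec (w i) b)) l = w l := by rw [h2u]
        rw [Function.update_of_ne hl] at e1 e2
        rw [e1, e2]
      by_cases hpos : ((cpRow hFq a (r i) : Fin F₁), k) = (cpRow hFq a' (r' i), k')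
      · exfalso
        have hj : cpRow hFq a (r i) = cpRow hFq a' (r' i) := congrArg Prod.fst hpos
        have hk : k = k' := congrArg Prod.snd hpos
        have ha : a = a' := by
          rw [← cpDiv_row hFq a (r i), hj, cpDiv_row]
        have hri : r i = r' i := by
          rw [← cpRes_row hFq a (r i), hj, cpRes_row]
        have : r = r' := by
          funext l
          by_cases hl : l = i
          · subst hl; exact hri
          · exact hrr l hl
        exact hne (by rw [ha, this, hk])
      · have hcross := hC3 _ _ _ _ _ hpos h1p h2p
        constructor
        · rw [hnone]
          show P (cpRow hFq a (r i)) k' = none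
          exact hcross.1
        · rw [hnone]
          show P (cpRow hFq a' (r' i)) k = none
          exact hcross.2
    · -- different positions: use star rows
      have hw1 : w i = res (dec (w i) b) := by
        conv_lhs => rw [← h1u]
        rw [Function.update_self]
      have hw2 : w i' = res (dec (w i') b) := by
        conv_lhs => rw [← h2u]
        rw [Function.update_self]
      have hr1 : r i' = w i' := by
        conv_rhs => rw [← h1u]
        rw [Function.update_of_ne (Ne.symm hii)]
      have hr2 : r' i = w i := by
        conv_rhs => rw [← h2u]
        rw [Function.update_of_ne hii]
      constructor
      · rw [hnone]
        show P (cpRow hFq a (r i')) k' = none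
        rw [hr1, hw2]
        exact hstar _ _ _ h2p a
      · rw [hnone]
        show P (cpRow hFq a' (r' i)) k = none
        rw [hr2, hw1]
        exact hstar _ _ _ h1p a'

  have habs4 : ∀ σ : (Fin m → Fin q) × Fin t,
      (univ.filter fun xc : (Fin lam × (Fin m → Fin q)) × (Fin m × Fin K₁) =>
        Q₀ xc.1 xc.2 = some σ).card = m * g₁ := by
    rintro ⟨w, b⟩
    rw [Finset.card_eq_sum_card_fiberwise (f := fun xc => xc.2.1) (t := univ)
      (fun x _ => mem_univ _)]
    have hper : ∀ i : Fin m,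
        ((univ.filter fun xc : (Fin lam × (Fin m → Fin q)) × (Fin m × Fin K₁) =>
          Q₀ xc.1 xc.2 = some (w, b)).filter fun xc => xc.2.1 = i).card = g₁ := by
      intro i
      rw [Finset.filter_filter]
      have hbij : (univ.filter fun xc : (Fin lam × (Fin m → Fin q)) × (Fin m × Fin K₁) =>
          Q₀ xc.1 xc.2 = some (w, b) ∧ xc.2.1 = i).card
          = (univ.filter fun jk : Fin F₁ × Fin K₁ =>
              P jk.1 jk.2 = some (dec (w i) b)).card := by
        apply Finset.card_nbij'
          (i := fun xc => (cpRow hFq xc.1.1 (xc.1.2 i), xc.2.2))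
          (j := fun jk => ((cpDiv hFq jk.1, Function.update w i (cpRes hFq jk.1)), (i, jk.2)))
        · intro xc hxc
          simp only [Finset.mem_coe, Finset.mem_filter, Finset.mem_univ, true_and] at hxc ⊢
          obtain ⟨hq, hi⟩ := hxc
          rw [hsome] at hq
          dsimp only at hq
          rw [hi] at hq
          exact hq.1
        · rintro ⟨j, k⟩ hjk
          simp only [Finset.mem_coe, Finset.mem_filter, Finset.mem_univ, true_and] at hjk ⊢
          refine ⟨?_, by trivial⟩
          rw [hsome]
          dsimp only
          constructor
          · rw [Function.update_self, cpRow_comp]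
            exact hjk
          · rw [Function.update_idem, hdres, Function.update_eq_self]
        · rintro ⟨⟨a, r⟩, ⟨i', k⟩⟩ hxc
          simp only [Finset.mem_coe, Finset.mem_filter, Finset.mem_univ, true_and] at hxc
          obtain ⟨hq, hi⟩ := hxc
          try dsimp only at hq
          try dsimp only at hi
          subst hi
          rw [hsome] at hq
          dsimp only at hq
          obtain ⟨hqp, hqu⟩ := hq
          simp only [Prod.mk.injEq]
          refine ⟨⟨?_, ?_⟩, by trivial⟩
          · rw [cpDiv_row]
          · rw [cpRes_row, ← hqu, Function.update_idem, Function.update_eq_self]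
        · rintro ⟨j, k⟩ hjk
          simp only [Prod.mk.injEq]
          refine ⟨?_, by trivial⟩
          rw [Function.update_self, cpRow_comp]
      rw [hbij]
      exact hreg _
    rw [Finset.sum_congr rfl (fun i _ => hper i), Finset.sum_const, Finset.card_univ,
      Fintype.card_fin, smul_eq_mul]
  -- helpers for transporting along equivalences
  have hm1 : m - 1 + 1 = m := Nat.succ_pred_eq_of_pos hm
  have hcardS : Fintype.card ((Fin m → Fin q) × Fin t) = S₁ * q ^ (m - 1) := by
    rw [Fintype.card_prod, Fintype.card_fun, Fintype.card_fin, Fintype.card_fin,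
      Fintype.card_fin]
    calc q ^ m * t = q ^ (m - 1) * q * t := by rw [← pow_succ, hm1]
      _ = q ^ (m - 1) * (q * t) := by rw [mul_assoc]
      _ = S₁ * q ^ (m - 1) := by rw [hqt, mul_comm]
  have eR : (Fin lam × (Fin m → Fin q)) ≃ Fin (lam * q ^ m) :=
    Fintype.equivFinOfCardEq (by
      rw [Fintype.card_prod, Fintype.card_fin, Fintype.card_fun, Fintype.card_fin,
        Fintype.card_fin])
  have eC : (Fin m × Fin K₁) ≃ Fin (m * K₁) :=
    Fintype.equivFinOfCardEq (by rw [Fintype.card_prod, Fintype.card_fin, Fintype.card_fin])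
  have eS : ((Fin m → Fin q) × Fin t) ≃ Fin (S₁ * q ^ (m - 1)) :=
    Fintype.equivFinOfCardEq hcardS
  have hmap_none : ∀ (o : Option ((Fin m → Fin q) × Fin t)),
      o.map eS = none ↔ o = none := by
    intro o; cases o <;> simp
  have hmap_some : ∀ (o : Option ((Fin m → Fin q) × Fin t)) (s' : Fin (S₁ * q ^ (m - 1))),
      o.map eS = some s' ↔ o = some (eS.symm s') := by
    intro o s'
    cases o with
    | none => simp
    | some σ =>
      simp only [Option.map_some, Option.some.injEq]
      constructor
      · intro hh; rw [← hh, Equiv.symm_apply_apply]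
      · intro hh; rw [hh, Equiv.apply_symm_apply]
  set Q : Fin (lam * q ^ m) → Fin (m * K₁) → Option (Fin (S₁ * q ^ (m - 1))) :=
    fun j k => (Q₀ (eR.symm j) (eC.symm k)).map eS with hQdef
  refine ⟨Q, ⟨?_, ?_, ?_⟩, ?_⟩
  · -- C1
    intro k
    calc (univ.filter fun j => Q j k = none).card
        = (univ.filter fun x => Q₀ x (eC.symm k) = none).card := by
          apply Finset.card_equiv eR.symm
          intro j
          simp only [Finset.mem_filter, Finset.mem_univ, true_and, hQdef, hmap_none]
      _ = Z₁ * q ^ (m - 1) := habs1 _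
  · -- C2
    intro s'
    obtain ⟨x, c, hx⟩ := habs2 (eS.symm s')
    refine ⟨eR x, eC c, ?_⟩
    rw [hQdef]
    show (Q₀ (eR.symm (eR x)) (eC.symm (eC c))).map eS = some s'
    rw [Equiv.symm_apply_apply, Equiv.symm_apply_apply, hx, Option.map_some,
      Equiv.apply_symm_apply]
  · -- C3
    intro j₁ j₂ k₁ k₂ s' hne h1 h2
    rw [hQdef] at h1 h2
    have h1' : Q₀ (eR.symm j₁) (eC.symm k₁) = some (eS.symm s') := (hmap_some _ _).mp h1
    have h2' : Q₀ (eR.symm j₂) (eC.symm k₂) = some (eS.symm s') := (hmap_some _ _).mp h2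
    have hne' : ((eR.symm j₁ : Fin lam × (Fin m → Fin q)), (eC.symm k₁ : Fin m × Fin K₁))
        ≠ (eR.symm j₂, eC.symm k₂) := by
      intro hcon
      apply hne
      have e1 : eR.symm j₁ = eR.symm j₂ := congrArg Prod.fst hcon
      have e2 : eC.symm k₁ = eC.symm k₂ := congrArg Prod.snd hcon
      rw [Prod.mk.injEq]
      exact ⟨eR.symm.injective e1, eC.symm.injective e2⟩
    obtain ⟨hA, hB⟩ := habs3 _ _ _ _ _ hne' h1' h2'
    constructor
    · rw [hQdef]
      show (Q₀ (eR.symm j₁) (eC.symm k₂)).map eS = none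
      rw [hA]; rfl
    · rw [hQdef]
      show (Q₀ (eR.symm j₂) (eC.symm k₁)).map eS = none
      rw [hB]; rfl
  · -- regularity
    intro s'
    calc (univ.filter fun jk : Fin (lam * q ^ m) × Fin (m * K₁) =>
          Q jk.1 jk.2 = some s').card
        = (univ.filter fun xc : (Fin lam × (Fin m → Fin q)) × (Fin m × Fin K₁) =>
            Q₀ xc.1 xc.2 = some (eS.symm s')).card := by
          apply Finset.card_equiv (Equiv.prodCongr eR eC).symm
          intro jk
          simp only [Finset.mem_filter, Finset.mem_univ, true_and, hQdef,
            Equiv.prodCongr_symm, Equiv.prodCongr_apply, Prod.map_fst, Prod.map_snd, hmap_some]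
      _ = m * g₁ := habs4 _

/-- from a g₁-regular (K₁,F₁,Z₁,S₁) base PDA with parameter λ,
    for every positive integer m there is an (m·g₁)-regular
    (m·K₁, λ(F₁/λ)^m, Z₁(F₁/λ)^{m−1}, S₁(F₁/λ)^{m−1}) PDA. -/
theorem cartesian_product_pda (K₁ F₁ Z₁ S₁ g₁ lam : ℕ)
    (h : ∃ P : Fin F₁ → Fin K₁ → Option (Fin S₁),
      IsBasePDA Z₁ lam P ∧ PDARegular g₁ P)
    (m : ℕ) (hm : 0 < m) :
    ∃ Q : Fin (lam * (F₁ / lam) ^ m) → Fin (m * K₁) →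
        Option (Fin (S₁ * (F₁ / lam) ^ (m - 1))),
      IsPDA (Z₁ * (F₁ / lam) ^ (m - 1)) Q ∧ PDARegular (m * g₁) Q := by
    classical
  obtain ⟨P, ⟨⟨hC1, hC2, hC3⟩, hlam, hdvdF, hdvdZ, hC4, φ, hφlt, hφstar, hφcard⟩, hreg⟩ := h
  by_cases hF0 : F₁ = 0
  · -- degenerate case: the array has no rows
    subst hF0
    have hS0 : S₁ = 0 := by
      by_contra hS
      have hpos : (0 : ℕ) < S₁ := Nat.pos_of_ne_zero hS
      exact absurd (φ ⟨0, hpos⟩).isLt (by omega)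
    have hrows : lam * ((0 : ℕ) / lam) ^ m = 0 := by
      rw [Nat.zero_div, zero_pow hm.ne', mul_zero]
    have hsym : S₁ * ((0 : ℕ) / lam) ^ (m - 1) = 0 := by rw [hS0, zero_mul]
    haveI hIE : IsEmpty (Fin (lam * ((0 : ℕ) / lam) ^ m)) := by
      rw [hrows]; infer_instance
    refine ⟨fun j k => Fin.elim0 (Fin.cast hrows j), ⟨?_, ?_, ?_⟩, ?_⟩
    · intro k
      rw [show (univ : Finset (Fin (lam * ((0 : ℕ) / lam) ^ m))) = ∅ from
        Finset.univ_eq_empty, Finset.filter_empty, Finset.card_empty]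
      by_cases hm2 : 2 ≤ m
      · rw [Nat.zero_div, zero_pow (by omega : m - 1 ≠ 0), mul_zero]
      · have hm1 : m = 1 := by omega
        subst hm1
        have hK : 0 < K₁ := by have := k.isLt; omega
        have hZ := hC1 ⟨0, hK⟩
        rw [show (univ : Finset (Fin 0)) = ∅ from Finset.univ_eq_empty,
          Finset.filter_empty, Finset.card_empty] at hZ
        rw [pow_zero, mul_one]
        exact hZ
    · intro s
      exact Fin.elim0 (Fin.cast hsym s)
    · intro j₁ j₂ k₁ k₂ s hne h1 h2
      exact Fin.elim0 (Fin.cast hrows j₁)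
    · intro s
      exact Fin.elim0 (Fin.cast hsym s)
  · -- main case
    have hFpos : 0 < F₁ := Nat.pos_of_ne_zero hF0
    have hq0 : 0 < F₁ / lam := Nat.div_pos (Nat.le_of_dvd hFpos hdvdF) hlam
    have hFq : lam * (F₁ / lam) = F₁ := Nat.mul_div_cancel' hdvdF
    have hqF : F₁ / lam ≤ F₁ := Nat.div_le_self _ _
    set q := F₁ / lam with hqdef
    set res : Fin S₁ → Fin q := fun s => ⟨(φ s).val, hφlt s⟩ with hres
    have hfc : ∀ r : Fin q, (univ.filter fun s => res s = r).card = lam * S₁ / F₁ := by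
      intro r
      have hcard := hφcard ⟨r.val, lt_of_lt_of_le r.isLt hqF⟩ r.isLt
      have hset : (univ.filter fun s => res s = r)
          = (univ.filter fun s => φ s = ⟨r.val, lt_of_lt_of_le r.isLt hqF⟩) := by
        ext s
        simp [hres, Fin.ext_iff]
      rw [hset]
      exact (Nat.div_eq_of_eq_mul_left hFpos hcard.symm).symm
    have hqt : q * (lam * S₁ / F₁) = S₁ := by
      have hsum := Finset.card_eq_sum_card_fiberwise (f := res)
        (s := (univ : Finset (Fin S₁))) (t := (univ : Finset (Fin q)))
        (fun x _ => Finset.mem_univ _)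
      rw [Finset.card_univ, Fintype.card_fin] at hsum
      rw [Finset.sum_congr rfl (fun r _ => hfc r), Finset.sum_const, Finset.card_univ,
        Fintype.card_fin, smul_eq_mul] at hsum
      exact hsum.symm
    obtain ⟨dec, ix, hdres, hdix, hixd⟩ := fiber_decode res hfc
    have hstar : ∀ (s : Fin S₁) (j : Fin F₁) (k : Fin K₁), P j k = some s →
        ∀ a : Fin lam, P (cpRow hFq a (res s)) k = none := by
      intro s j k hjk a
      have h0 : P (φ s) k = none := hφstar s j k hjk
      have hmod : (cpRow hFq a (res s)).val % q = (φ s).val % q := by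
        rw [cpRow_mod, Nat.mod_eq_of_lt (hφlt s)]
      exact (hC4 _ _ k hmod).mpr h0
    exact construct_aux hm hFq P hC1 hC2 hC3 hreg res dec ix hstar hdres hdix hixd hqt
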